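/- Let f : [0,∞) → [0,1] be non-increasing with f(s₀) = e^{−s₀} for some s₀ > 0, and suppose f(t+s) ≥ f(t)·(f(s) − ε) for all s, t ≥ 0, where ε ∈ [0,1). If f(s₀/k) ≥ ε for an integer k ≥ 1, then f(s₀/k) ≤ ε + e^{−s₀/k}. -/

import Mathlib

open Real

/-- Iterated super-multiplicativity: if `f : [0,∞) → [0,1]` is non-increasing
with `f(s₀) = e^{−s₀}` for some `s₀ > 0`, and `f(t+s) ≥ f(t)·(f(s)−ε)` for all
`s,t ≥ 0` with `ε ∈ [0,1)`, then for any integer `k ≥ 1` with `f(s₀/k) ≥ ε` we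
have `f(s₀/k) ≤ ε + e^{−s₀/k}`. -/
theorem iterated_supermultiplicativity
    (f : ℝ → ℝ) (s₀ ε : ℝ) (hs₀ : 0 < s₀) (hε0 : 0 ≤ ε) (hε1 : ε < 1)
    (hrange : ∀ t, 0 ≤ t → f t ∈ Set.Icc (0 : ℝ) 1)
    (hmono : AntitoneOn f (Set.Ici 0))
    (hfs₀ : f s₀ = Real.exp (-s₀))
    (hsuper : ∀ t s : ℝ, 0 ≤ t → 0 ≤ s → f (t + s) ≥ f t * (f s - ε)) :
    ∀ k : ℕ, 1 ≤ k → ε ≤ f (s₀ / k) →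
      f (s₀ / k) ≤ ε + Real.exp (-(s₀ / k)) := by
  intro k hk hεf
  set x := s₀ / k with hx
  have hkpos : (0 : ℝ) < k := by exact_mod_cast hk
  have hxpos : 0 < x := div_pos hs₀ hkpos
  have hxnn : 0 ≤ x := hxpos.le
  have hnn : 0 ≤ f x - ε := sub_nonneg.mpr hεf
  -- f (n • x) ≥ (f x - ε)^n for n ≥ 1
  have key : ∀ n : ℕ, 1 ≤ n → (f x - ε) ^ n ≤ f (n * x) := by
    intro n hn
    induction n with
    | zero => omega
    | succ m ih =>
      rcases Nat.eq_or_lt_of_le hn with h1 | h1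
      · simp [← h1]
        linarith [hεf]
      · have hm : 1 ≤ m := by omega
        have hmx : 0 ≤ (m : ℝ) * x := by positivity
        have := hsuper ((m : ℝ) * x) x hmx hxnn
        calc (f x - ε) ^ (m + 1) = (f x - ε) ^ m * (f x - ε) := by ring
          _ ≤ f ((m : ℝ) * x) * (f x - ε) := by
              exact mul_le_mul_of_nonneg_right (ih hm) hnn
          _ ≤ f ((m : ℝ) * x + x) := this
          _ = f (((m : ℕ) + 1 : ℕ) * x) := by push_cast; ring_nf
  have hkx : (k : ℝ) * x = s₀ := by
    rw [hx]; field_simp [hkpos.ne']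
  have hk' := key k hk
  rw [hkx, hfs₀] at hk'
  have hexp : Real.exp (-s₀) = (Real.exp (-x)) ^ k := by
    rw [← Real.exp_nat_mul]
    congr 1
    rw [← hkx]; ring
  rw [hexp] at hk'
  have : f x - ε ≤ Real.exp (-x) := by
    have := pow_le_pow_left₀ hnn (le_refl (f x - ε)) k
    exact (pow_le_pow_iff_left₀ hnn (Real.exp_nonneg _) (by omega)).mp hk'
  linarith
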